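/- For every real λ ≠ 0 one has the identity X_a(λ)·X_a(−λ)·A(λ) + Y_a(λ)·Y_a(−λ)·B(λ) = −(1/(ħ²λ))·(1 + sinh(ħλ)/sinh(λ/(2η))). (This is the coefficient identity underlying the commutator [a(λ), a(μ)] = −(1/(ħ²λ))(1 + sinh(ħλ)/sinh(λ/(2η)))·δ(λ+μ) for a(λ) = X_a(λ)α(λ) + Y_a(λ)β(λ).) -/

import Mathlib

set_option maxHeartbeats 1000000 in
/-- for every real λ ≠ 0,
`X_a(λ)·X_a(−λ)·A(λ) + Y_a(λ)·Y_a(−λ)·B(λ) = −(1/(ħ²λ))·(1 + sinh(ħλ)/sinh(λ/(2η)))`. -/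
theorem stmt_5 (ℏ η η' : ℝ) (hℏ : 0 < ℏ) (hη : 0 < η) (hη' : 0 < η')
    (hrel : 1 / η' = 1 / η + ℏ)
    (D A B Xa Xb Ya Yb : ℝ → ℝ)
    (hD : ∀ l : ℝ, D l =
      4 * Real.cosh (ℏ * l / 2) +
        ((Real.sinh (l / (2 * η)))⁻¹ - (Real.sinh (l / (2 * η')))⁻¹) * Real.sinh (ℏ * l) + 2)
    (hA : ∀ l : ℝ, A l = l / D l)
    (hB : ∀ l : ℝ, B l =
      l * ((1 + (Real.sinh (l / (2 * η)))⁻¹ * Real.sinh (ℏ * l)) *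
            (1 - (Real.sinh (l / (2 * η')))⁻¹ * Real.sinh (ℏ * l)) -
            4 * (Real.cosh (ℏ * l / 2)) ^ 2) / D l)
    (hXa : ∀ l : ℝ, Xa l =
      (1 / (ℏ * l)) * ((Real.sinh (l / (2 * η)))⁻¹ * Real.sinh (ℏ * l) + 2 * Real.cosh (ℏ * l / 2) + 1))
    (hXb : ∀ l : ℝ, Xb l =
      (1 / (ℏ * l)) * ((Real.sinh (l / (2 * η')))⁻¹ * Real.sinh (ℏ * l) - 2 * Real.cosh (ℏ * l / 2) - 1))
    (hYa : ∀ l : ℝ, Ya l = 1 / (ℏ * l))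
    (hYb : ∀ l : ℝ, Yb l = 1 / (ℏ * l)) :
    ∀ l : ℝ, l ≠ 0 →
      Xa l * Xa (-l) * A l + Ya l * Ya (-l) * B l =
        -(1 / (ℏ ^ 2 * l)) * (1 + Real.sinh (ℏ * l) / Real.sinh (l / (2 * η))) := by
  intro l hl
  have hxy : l / (2 * η') = l / (2 * η) + ℏ * l / 2 := by
    rw [show l / (2 * η') = l * (1 / η') / 2 from by ring, hrel]; ring
  have e1 : (-l) / (2 * η) = -(l / (2 * η)) := by ring
  have e1' : (-l) / (2 * η') = -(l / (2 * η')) := by ring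
  have e2 : ℏ * -l = -(ℏ * l) := by ring
  have e3 : ℏ * -l / 2 = -(ℏ * l / 2) := by ring
  have hXal := hXa l
  have hXal' := hXa (-l)
  have hAl := hA l
  have hBl := hB l
  have hDl := hD l
  have hYal := hYa l
  have hYal' := hYa (-l)
  rw [e1, e2, show -(ℏ * l) / 2 = -(ℏ * l / 2) by ring, Real.sinh_neg, Real.sinh_neg,
    Real.cosh_neg, inv_neg] at hXal'
  rw [div_eq_mul_inv (Real.sinh (ℏ * l))]
  set s : ℝ := (Real.sinh (l / (2 * η)))⁻¹ with hs
  set t : ℝ := (Real.sinh (l / (2 * η')))⁻¹ with ht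
  set h : ℝ := Real.sinh (ℏ * l) with hh
  set c : ℝ := Real.cosh (ℏ * l / 2) with hc
  have hcpos : 0 < c := by rw [hc]; exact Real.cosh_pos _
  have hst : 0 ≤ (s - t) * h := by
    rcases lt_or_gt_of_ne hl with hneg | hpos
    · have hx : l / (2 * η) < 0 := div_neg_of_neg_of_pos hneg (by positivity)
      have hyx : l / (2 * η') < l / (2 * η) := by rw [hxy]; nlinarith
      have hsx : Real.sinh (l / (2 * η)) < 0 := Real.sinh_neg_iff.2 hx
      have hsy : Real.sinh (l / (2 * η')) < 0 := Real.sinh_neg_iff.2 (hyx.trans hx)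
      have hstlt : s < t := (inv_lt_inv_of_neg hsx hsy).2 (Real.sinh_lt_sinh.2 hyx)
      have hhneg : h < 0 := Real.sinh_neg_iff.2 (by nlinarith)
      exact (mul_pos_of_neg_of_neg (by linarith) hhneg).le
    · have hx : 0 < l / (2 * η) := by positivity
      have hyx : l / (2 * η) < l / (2 * η') := by rw [hxy]; nlinarith
      have hsx : 0 < Real.sinh (l / (2 * η)) := Real.sinh_pos_iff.2 hx
      have hstlt : t < s := inv_strictAnti₀ hsx (Real.sinh_lt_sinh.2 hyx)
      have hhpos : 0 < h := Real.sinh_pos_iff.2 (by positivity)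
      exact mul_nonneg (by linarith) hhpos.le
  have hDpos : (0:ℝ) < 4 * c + (s - t) * h + 2 := by linarith
  rw [hDl] at hAl hBl
  rw [hXal, hXal', hAl, hYal, hYal', hBl]
  generalize hDD : 4 * c + (s - t) * h + 2 = DD at *
  field_simp [hDpos.ne']
  rw [← hDD]
  ring
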